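/- arXiv:math/0306363 — 3 statements merged into one kernel-verified Lean document; each statement's English description precedes it below -/
import Mathlib

section
/- The explicit function z₁(x) = [1 + c_N |x|^{2(1+a-b)(N-2-2a)/(N-2(1+a-b))}]^{-(N-2(1+a-b))/(2(1+a-b))}, where c_N = (N-2(1+a-b))/(N(N-2-2a)²), is a positive C² solution on ℝ^N \ {0} of -div(|x|^{-2a}∇u) = |x|^{-bp} u^{p-1} with p = 2N/(N-2(1+a-b)). -/
open Real

/-- Divergence of a vector field on `ℝ^N`: sum of partial derivatives of components. -/
noncomputable def vdiv {N : ℕ} (F : EuclideanSpace ℝ (Fin N) → EuclideanSpace ℝ (Fin N))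
    (x : EuclideanSpace ℝ (Fin N)) : ℝ :=
  ∑ i, fderiv ℝ F x (EuclideanSpace.single i 1) i

/-- The weighted operator `div(|x|^{-2c} ∇u)`. -/
noncomputable def divWeight {N : ℕ} (c : ℝ) (u : EuclideanSpace ℝ (Fin N) → ℝ)
    (x : EuclideanSpace ℝ (Fin N)) : ℝ :=
  vdiv (fun y => ‖y‖ ^ (-(2 * c)) • gradient u y) x

lemma myHasFDerivAt_norm {E : Type*} [NormedAddCommGroup E] [InnerProductSpace ℝ E]
    {x : E} (hx : x ≠ 0) :
    HasFDerivAt (fun y : E => ‖y‖) (‖x‖⁻¹ • innerSL ℝ x) x := by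
  have hn : ‖x‖ ≠ 0 := norm_ne_zero_iff.mpr hx
  have h := ((hasStrictFDerivAt_norm_sq x).hasFDerivAt).sqrt (by positivity)
  have he : (fun y : E => Real.sqrt (‖y‖ ^ 2)) = fun y : E => ‖y‖ :=
    funext fun y => Real.sqrt_sq (norm_nonneg y)
  rw [he] at h
  convert h using 1
  rw [Real.sqrt_sq (norm_nonneg x)]
  ext v
  simp only [ContinuousLinearMap.smul_apply, smul_eq_mul, ContinuousLinearMap.coe_smul',
    Pi.smul_apply]
  rw [two_smul]
  field_simp
  ring

lemma radial_hasFDerivAt {E : Type*} [NormedAddCommGroup E] [InnerProductSpace ℝ E]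
    {g : ℝ → ℝ} {g' : ℝ} {x : E} (hx : x ≠ 0)
    (hg : HasDerivAt g g' ‖x‖) :
    HasFDerivAt (fun y : E => g ‖y‖) ((g' * ‖x‖⁻¹) • innerSL ℝ x) x := by
  have h := hg.comp_hasFDerivAt x (myHasFDerivAt_norm hx)
  rw [smul_smul] at h
  exact h

lemma radial_gradient {E : Type*} [NormedAddCommGroup E] [InnerProductSpace ℝ E]
    [CompleteSpace E] {g : ℝ → ℝ} {g' : ℝ} {x : E} (hx : x ≠ 0)
    (hg : HasDerivAt g g' ‖x‖) :
    gradient (fun y : E => g ‖y‖) x = (g' * ‖x‖⁻¹) • x := by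
  have h : HasGradientAt (fun y : E => g ‖y‖) ((g' * ‖x‖⁻¹) • x) x := by
    rw [hasGradientAt_iff_hasFDerivAt]
    convert radial_hasFDerivAt hx hg using 1
    ext v
    simp [InnerProductSpace.toDual_apply_apply, real_inner_smul_left]
    ext v
    simp [InnerProductSpace.toDual_apply_apply, real_inner_smul_left]
  exact h.gradient

lemma vdiv_radial {N : ℕ} {H : ℝ → ℝ} {H' : ℝ}
    {F : EuclideanSpace ℝ (Fin N) → EuclideanSpace ℝ (Fin N)}
    {x : EuclideanSpace ℝ (Fin N)} (hx : x ≠ 0)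
    (hF : F =ᶠ[nhds x] fun y => H ‖y‖ • y) (hH : HasDerivAt H H' ‖x‖) :
    vdiv F x = N * H ‖x‖ + H' * ‖x‖ := by
  have hn : ‖x‖ ≠ 0 := norm_ne_zero_iff.mpr hx
  have hL : HasFDerivAt (fun y : EuclideanSpace ℝ (Fin N) => H ‖y‖ • y)
      (H ‖x‖ • ContinuousLinearMap.id ℝ _ +
        ((H' * ‖x‖⁻¹) • innerSL ℝ x).smulRight x) x :=
    (radial_hasFDerivAt hx hH).smul (hasFDerivAt_id x)
  have hfd : fderiv ℝ F x = H ‖x‖ • ContinuousLinearMap.id ℝ _ +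
        ((H' * ‖x‖⁻¹) • innerSL ℝ x).smulRight x := by
    rw [hF.fderiv_eq, hL.fderiv]
  unfold vdiv
  rw [hfd]
  have hterm : ∀ i : Fin N,
      ((H ‖x‖ • ContinuousLinearMap.id ℝ (EuclideanSpace ℝ (Fin N)) +
        ((H' * ‖x‖⁻¹) • innerSL ℝ x).smulRight x) (EuclideanSpace.single i 1)) i
      = H ‖x‖ + (H' * ‖x‖⁻¹) * (x i * x i) := by
    intro i
    simp only [ContinuousLinearMap.add_apply, ContinuousLinearMap.smul_apply,
      ContinuousLinearMap.id_apply, ContinuousLinearMap.smulRight_apply,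
      innerSL_apply_apply, PiLp.add_apply, PiLp.smul_apply, smul_eq_mul]
    rw [EuclideanSpace.inner_single_right]
    simp [EuclideanSpace.single_apply]
    ring
  rw [Finset.sum_congr rfl fun i _ => hterm i]
  rw [Finset.sum_add_distrib, Finset.sum_const, ← Finset.mul_sum]
  have hsum : ∑ i : Fin N, x i * x i = ‖x‖ ^ 2 := by
    rw [EuclideanSpace.norm_eq, Real.sq_sqrt (Finset.sum_nonneg fun i _ => sq_nonneg _)]
    exact Finset.sum_congr rfl fun i _ => by rw [Real.norm_eq_abs, sq_abs, sq]
  rw [hsum]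
  simp only [Finset.card_univ, Fintype.card_fin, nsmul_eq_mul]
  field_simp

lemma scalar_ode (N : ℕ) (hN : 3 ≤ N) (a b p cN A B : ℝ)
    (ha0 : 0 ≤ a) (ha : a < ((N : ℝ) - 2) / 2) (hb1 : a ≤ b) (hb2 : b < a + 1)
    (hp : p = 2 * (N : ℝ) / ((N : ℝ) - 2 * (1 + a - b)))
    (hcN : cN = ((N : ℝ) - 2 * (1 + a - b)) / ((N : ℝ) * ((N : ℝ) - 2 - 2 * a) ^ 2))
    (hA : A = 2 * (1 + a - b) * ((N : ℝ) - 2 - 2 * a) / ((N : ℝ) - 2 * (1 + a - b)))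
    (hB : B = ((N : ℝ) - 2 * (1 + a - b)) / (2 * (1 + a - b))) :
    ∀ r : ℝ, 0 < r →
    -((N : ℝ) * (-(B * cN * A) * r ^ (A - 2 * a - 2) * (1 + cN * r ^ A) ^ (-B - 1)) +
      -(B * cN * A) *
        ((A - 2 * a - 2) * r ^ (A - 2 * a - 2 - 1) * (1 + cN * r ^ A) ^ (-B - 1) +
          r ^ (A - 2 * a - 2) *
            (cN * (A * r ^ (A - 1)) * (-B - 1) * (1 + cN * r ^ A) ^ (-B - 1 - 1))) * r) =
      r ^ (-(b * p)) * ((1 + cN * r ^ A) ^ (-B)) ^ (p - 1) := by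
  have hN3 : (3 : ℝ) ≤ (N : ℝ) := by exact_mod_cast hN
  have ht : 0 < 1 + a - b := by linarith
  have hδ : 0 < (N : ℝ) - 2 - 2 * a := by linarith
  have hNt : 0 < (N : ℝ) - 2 * (1 + a - b) := by linarith
  have hNpos : (0 : ℝ) < N := by linarith
  have hc : 0 < cN := by rw [hcN]; positivity
  have id1 : -(b * p) = A - 2 * a - 2 := by
    rw [hp, hA]; field_simp; ring
  have id2 : -B * (p - 1) = -B - 1 - 1 := by
    rw [hp, hB]; field_simp; ring
  have id3 : (N : ℝ) + (A - 2 * a - 2) = (B + 1) * A := by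
    rw [hA, hB]; field_simp; ring
  have id4 : B * cN * A * ((B + 1) * A) = 1 := by
    rw [hA, hB, hcN]; field_simp; ring
  intro r hr
  have hrne : r ≠ 0 := hr.ne'
  have hQ : (0 : ℝ) < r ^ A := rpow_pos_of_pos hr A
  have hu : 0 < 1 + cN * r ^ A := by positivity
  have hri : r⁻¹ * r = 1 := inv_mul_cancel₀ hrne
  set P : ℝ := r ^ (A - 2 * a - 2) with hPdef
  set Q : ℝ := r ^ A with hQdef
  set U : ℝ := (1 + cN * Q) ^ (-B - 1 - 1) with hUdef
  have eU : (1 + cN * Q) ^ (-B - 1) = U * (1 + cN * Q) := by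
    rw [hUdef, show -B - 1 = (-B - 1 - 1) + 1 by ring, Real.rpow_add hu, Real.rpow_one]; ring_nf
  have eP1 : r ^ (A - 2 * a - 2 - 1) = P * r⁻¹ := by
    rw [hPdef, show A - 2 * a - 2 - 1 = (A - 2 * a - 2) + (-1) by ring, Real.rpow_add hr,
      Real.rpow_neg_one]
  have eA1 : r ^ (A - 1) = Q * r⁻¹ := by
    rw [hQdef, show A - 1 = A + (-1) by ring, Real.rpow_add hr, Real.rpow_neg_one]
  have eR1 : r ^ (-(b * p)) = P := by rw [id1]
  have eR2 : ((1 + cN * Q) ^ (-B)) ^ (p - 1) = U := by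
    rw [← Real.rpow_mul hu.le, id2]
  rw [eU, eP1, eA1, eR1, eR2]
  linear_combination
    (B * cN * A * (A - 2 * a - 2) * P * U * (1 + cN * Q) -
      B * cN * A * cN * A * (B + 1) * P * Q * U) * hri +
    (B * cN * A * P * U * (1 + cN * Q)) * id3 + (P * U) * id4

theorem stmt7 (N : ℕ) (hN : 3 ≤ N) (a b p cN : ℝ)
    (ha0 : 0 ≤ a) (ha : a < ((N : ℝ) - 2) / 2) (hb1 : a ≤ b) (hb2 : b < a + 1)
    (hp : p = 2 * (N : ℝ) / ((N : ℝ) - 2 * (1 + a - b)))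
    (hcN : cN = ((N : ℝ) - 2 * (1 + a - b)) / ((N : ℝ) * ((N : ℝ) - 2 - 2 * a) ^ 2))
    (z₁ : EuclideanSpace ℝ (Fin N) → ℝ)
    (hz₁ : ∀ x, z₁ x =
      (1 + cN * ‖x‖ ^ (2 * (1 + a - b) * ((N : ℝ) - 2 - 2 * a) / ((N : ℝ) - 2 * (1 + a - b))))
        ^ (-(((N : ℝ) - 2 * (1 + a - b)) / (2 * (1 + a - b))))) :
    (∀ x : EuclideanSpace ℝ (Fin N), x ≠ 0 → 0 < z₁ x) ∧
    ContDiffOn ℝ 2 z₁ {x | x ≠ 0} ∧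
    (∀ x : EuclideanSpace ℝ (Fin N), x ≠ 0 →
      -divWeight a z₁ x = ‖x‖ ^ (-(b * p)) * z₁ x ^ (p - 1)) := by
  have hN3 : (3 : ℝ) ≤ (N : ℝ) := by exact_mod_cast hN
  have ht : 0 < 1 + a - b := by linarith
  have hδ : 0 < (N : ℝ) - 2 - 2 * a := by linarith
  have hNt : 0 < (N : ℝ) - 2 * (1 + a - b) := by linarith
  have hNpos : (0 : ℝ) < N := by linarith
  have hc : 0 < cN := by rw [hcN]; positivity
  set A : ℝ := 2 * (1 + a - b) * ((N : ℝ) - 2 - 2 * a) / ((N : ℝ) - 2 * (1 + a - b)) with hA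
  set B : ℝ := ((N : ℝ) - 2 * (1 + a - b)) / (2 * (1 + a - b)) with hB
  -- note : hz₁ now reads z₁ x = (1 + cN * ‖x‖ ^ A) ^ (-B)
  set g : ℝ → ℝ := fun r => (1 + cN * r ^ A) ^ (-B) with hg
  have hzg : z₁ = fun y => g ‖y‖ := funext fun x => hz₁ x
  refine ⟨?_, ?_, ?_⟩
  · intro x hx
    rw [hz₁ x]
    have h0 : (0:ℝ) ≤ ‖x‖ := norm_nonneg x
    have h1 : (0:ℝ) ≤ ‖x‖ ^ A := Real.rpow_nonneg h0 A
    have : (0:ℝ) < 1 + cN * ‖x‖ ^ A := by positivity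
    exact Real.rpow_pos_of_pos this _
  · rw [hzg]
    intro x hx
    have hr : 0 < ‖x‖ := norm_pos_iff.mpr hx
    have h1 : ContDiffAt ℝ 2 g ‖x‖ := by
      apply ContDiffAt.rpow_const_of_ne
      · exact contDiffAt_const.add
          (contDiffAt_const.mul (Real.contDiffAt_rpow_const_of_ne hr.ne'))
      · have h2 : (0:ℝ) < 1 + cN * ‖x‖ ^ A := by
          have := Real.rpow_pos_of_pos hr A
          positivity
        exact h2.ne'
    exact (h1.comp x (contDiffAt_norm ℝ hx)).contDiffWithinAt
  · intro x hx
    have hr : 0 < ‖x‖ := norm_pos_iff.mpr hx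
    set H : ℝ → ℝ := fun r =>
      -(B * cN * A) * r ^ (A - 2 * a - 2) * (1 + cN * r ^ A) ^ (-B - 1) with hH
    set H' : ℝ → ℝ := fun r =>
      -(B * cN * A) *
        ((A - 2 * a - 2) * r ^ (A - 2 * a - 2 - 1) * (1 + cN * r ^ A) ^ (-B - 1) +
          r ^ (A - 2 * a - 2) *
            (cN * (A * r ^ (A - 1)) * (-B - 1) * (1 + cN * r ^ A) ^ (-B - 1 - 1))) with hH'
    have hu : ∀ r : ℝ, 0 < r → (0:ℝ) < 1 + cN * r ^ A := by
      intro r hr0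
      have := Real.rpow_pos_of_pos hr0 A
      positivity
    have hinner : ∀ r : ℝ, 0 < r →
        HasDerivAt (fun s : ℝ => 1 + cN * s ^ A) (cN * (A * r ^ (A - 1))) r := by
      intro r hr0
      exact ((Real.hasDerivAt_rpow_const (Or.inl hr0.ne')).const_mul cN).const_add 1
    have hHder : ∀ r : ℝ, 0 < r → HasDerivAt H (H' r) r := by
      intro r hr0
      have h1 : HasDerivAt (fun s : ℝ => -(B * cN * A) * s ^ (A - 2 * a - 2))
          (-(B * cN * A) * ((A - 2 * a - 2) * r ^ (A - 2 * a - 2 - 1))) r :=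
        (Real.hasDerivAt_rpow_const (Or.inl hr0.ne')).const_mul _
      have h3 : HasDerivAt (fun s : ℝ => (1 + cN * s ^ A) ^ (-B - 1))
          (cN * (A * r ^ (A - 1)) * (-B - 1) * (1 + cN * r ^ A) ^ (-B - 1 - 1)) r :=
        (hinner r hr0).rpow_const (Or.inl (hu r hr0).ne')
      have := h1.mul h3
      rw [hH, hH']
      exact this.congr_deriv (by beta_reduce; ring)
    have hgrad : ∀ y : EuclideanSpace ℝ (Fin N), y ≠ 0 →
        gradient z₁ y =
          ((cN * (A * ‖y‖ ^ (A - 1)) * (-B) * (1 + cN * ‖y‖ ^ A) ^ (-B - 1)) * ‖y‖⁻¹) • y := by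
      intro y hy
      have hry : 0 < ‖y‖ := norm_pos_iff.mpr hy
      have hgd : HasDerivAt g
          (cN * (A * ‖y‖ ^ (A - 1)) * (-B) * (1 + cN * ‖y‖ ^ A) ^ (-B - 1)) ‖y‖ :=
        (hinner ‖y‖ hry).rpow_const (Or.inl (hu ‖y‖ hry).ne')
      rw [hzg]
      exact radial_gradient hy hgd
    have hev : (fun y : EuclideanSpace ℝ (Fin N) => ‖y‖ ^ (-(2 * a)) • gradient z₁ y)
        =ᶠ[nhds x] fun y => H ‖y‖ • y := by
      filter_upwards [IsOpen.mem_nhds isOpen_compl_singleton hx] with y hy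
      have hy' : y ≠ 0 := hy
      have hry : 0 < ‖y‖ := norm_pos_iff.mpr hy'
      rw [hgrad y hy', smul_smul, hH]
      congr 1
      have e : ‖y‖ ^ (-(2 * a)) * ‖y‖ ^ (A - 1) * ‖y‖⁻¹ = ‖y‖ ^ (A - 2 * a - 2) := by
        rw [← Real.rpow_neg_one ‖y‖, ← Real.rpow_add hry, ← Real.rpow_add hry]
        congr 1
        ring
      calc ‖y‖ ^ (-(2 * a)) *
            (cN * (A * ‖y‖ ^ (A - 1)) * (-B) * (1 + cN * ‖y‖ ^ A) ^ (-B - 1) * ‖y‖⁻¹)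
          = -(B * cN * A) * (‖y‖ ^ (-(2 * a)) * ‖y‖ ^ (A - 1) * ‖y‖⁻¹) *
              (1 + cN * ‖y‖ ^ A) ^ (-B - 1) := by ring
        _ = -(B * cN * A) * ‖y‖ ^ (A - 2 * a - 2) * (1 + cN * ‖y‖ ^ A) ^ (-B - 1) := by
            rw [e]
    have hdvw : divWeight a z₁ x = N * H ‖x‖ + H' ‖x‖ * ‖x‖ := by
      unfold divWeight
      exact vdiv_radial hx hev (hHder ‖x‖ hr)
    rw [hdvw, hz₁ x]
    rw [hH, hH']
    exact scalar_ode N hN a b p cN A B ha0 ha hb1 hb2 hp hcN hA hB ‖x‖ hr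
end

section
/- For u(x) = |x|^{2+2a-N} + A with A > 0, the limit as σ → 0 of ∫_{∂B_σ(0)} B(σ,x,u,∇u) equals -((N-2-2a)²/2) A |S^{N-1}|, where |S^{N-1}| is the surface measure of the unit sphere. -/
open Real MeasureTheory RealInnerProductSpace Filter

theorem stmt12 (N : ℕ) (hN : 3 ≤ N) (a A : ℝ) (ha : a < ((N : ℝ) - 2) / 2) (hA : 0 < A)
    (u : EuclideanSpace ℝ (Fin N) → ℝ)
    (hu : ∀ x, u x = ‖x‖ ^ (2 + 2 * a - (N : ℝ)) + A)
    (B : ℝ → EuclideanSpace ℝ (Fin N) → ℝ)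
    (hB : ∀ σ x, B σ x =
      (((N : ℝ) - 2 - 2 * a) / 2) * ‖x‖ ^ (-(2 * a)) * u x * ⟪gradient u x, σ⁻¹ • x⟫
        - (σ / 2) * ‖x‖ ^ (-(2 * a)) * ‖gradient u x‖ ^ 2
        + σ * ‖x‖ ^ (-(2 * a)) * ⟪gradient u x, σ⁻¹ • x⟫ ^ 2) :
    Tendsto (fun σ : ℝ => σ ^ ((N : ℝ) - 1) *
        ∫ ω : Metric.sphere (0 : EuclideanSpace ℝ (Fin N)) 1,
          B σ (σ • (ω : EuclideanSpace ℝ (Fin N)))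
          ∂((volume : Measure (EuclideanSpace ℝ (Fin N))).toSphere))
      (nhdsWithin 0 (Set.Ioi 0))
      (nhds (-((((N : ℝ) - 2 - 2 * a) ^ 2) / 2) * A *
        (((volume : Measure (EuclideanSpace ℝ (Fin N))).toSphere) Set.univ).toReal)) := by
  set p : ℝ := 2 + 2 * a - N with hpdef
  set S : ℝ := (((volume : Measure (EuclideanSpace ℝ (Fin N))).toSphere) Set.univ).toReal
    with hSdef
  -- u as a function of the squared norm
  have hueq : u = fun y : EuclideanSpace ℝ (Fin N) => (‖y‖ ^ 2) ^ (p / 2) + A := by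
    funext y
    rw [hu y]
    congr 1
    rw [← Real.rpow_natCast ‖y‖ 2, ← Real.rpow_mul (norm_nonneg y)]
    norm_num
    rw [show (2 : ℝ) * (p / 2) = p by ring]
  -- gradient of u at x ≠ 0
  have hgrad : ∀ x : EuclideanSpace ℝ (Fin N), x ≠ 0 →
      HasGradientAt u ((p * ‖x‖ ^ (p - 2)) • x) x := by
    intro x hx
    have hnx : ‖x‖ ≠ 0 := norm_ne_zero_iff.mpr hx
    have h0 : (fun y : EuclideanSpace ℝ (Fin N) => ‖y‖ ^ 2) x ≠ 0 := pow_ne_zero 2 hnx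
    have h1 := ((hasStrictFDerivAt_norm_sq x).rpow_const (p := p / 2) (Or.inl h0)).hasFDerivAt
    have h2 := h1.add_const A
    rw [← hueq] at h2
    rw [hasGradientAt_iff_hasFDerivAt]
    have hpow : ((‖x‖ : ℝ) ^ 2) ^ (p / 2 - 1) = ‖x‖ ^ (p - 2) := by
      rw [← Real.rpow_natCast ‖x‖ 2, ← Real.rpow_mul (norm_nonneg x)]
      norm_num
      ring_nf
    refine h2.congr_fderiv ?_
    ext v
    simp only [InnerProductSpace.toDual_apply_apply, ContinuousLinearMap.coe_smul',
      Pi.smul_apply, smul_eq_mul, real_inner_smul_left, innerSL_apply_apply, nsmul_eq_mul,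
      Pi.mul_apply, two_smul, ContinuousLinearMap.add_apply]
    rw [hpow]
    ring
  have key : ∀ σ ∈ Set.Ioi (0 : ℝ),
      σ ^ ((N : ℝ) - 1) * (∫ ω : Metric.sphere (0 : EuclideanSpace ℝ (Fin N)) 1,
          B σ (σ • (ω : EuclideanSpace ℝ (Fin N)))
            ∂((volume : Measure (EuclideanSpace ℝ (Fin N))).toSphere))
        = -((((N : ℝ) - 2 - 2 * a) ^ 2) / 2) * A * S := by
    intro σ hσ
    have hσ0 : (0 : ℝ) < σ := hσ
    have hσne : σ ≠ 0 := hσ0.ne'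
    have hBval : ∀ ω : Metric.sphere (0 : EuclideanSpace ℝ (Fin N)) 1,
        B σ (σ • (ω : EuclideanSpace ℝ (Fin N))) = -(p ^ 2 / 2) * A * σ ^ ((1 : ℝ) - N) := by
      intro ω
      have hω : ‖(ω : EuclideanSpace ℝ (Fin N))‖ = 1 := by
        have := ω.2
        simpa [mem_sphere_iff_norm] using this
      have hnorm : ‖σ • (ω : EuclideanSpace ℝ (Fin N))‖ = σ := by
        rw [norm_smul, hω, Real.norm_eq_abs, abs_of_pos hσ0, mul_one]
      have hxne : σ • (ω : EuclideanSpace ℝ (Fin N)) ≠ 0 := by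
        intro h
        rw [h, norm_zero] at hnorm
        exact hσne hnorm.symm
      have hg : gradient u (σ • (ω : EuclideanSpace ℝ (Fin N)))
          = (p * σ ^ (p - 2)) • (σ • (ω : EuclideanSpace ℝ (Fin N))) := by
        have := (hgrad _ hxne).gradient
        rwa [hnorm] at this
      have hsm : σ⁻¹ • (σ • (ω : EuclideanSpace ℝ (Fin N))) = (ω : EuclideanSpace ℝ (Fin N)) := by
        rw [smul_smul, inv_mul_cancel₀ hσne, one_smul]
      have hin : ⟪gradient u (σ • (ω : EuclideanSpace ℝ (Fin N))),
          σ⁻¹ • (σ • (ω : EuclideanSpace ℝ (Fin N)))⟫ = p * σ ^ (p - 2) * σ := by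
        rw [hg, hsm, real_inner_smul_left, real_inner_smul_left,
          real_inner_self_eq_norm_sq, hω]
        ring
      have hgn : ‖gradient u (σ • (ω : EuclideanSpace ℝ (Fin N)))‖ ^ 2
          = (p * σ ^ (p - 2)) ^ 2 * σ ^ 2 := by
        rw [hg, norm_smul, norm_smul, hω, Real.norm_eq_abs, Real.norm_eq_abs,
          abs_of_pos hσ0, mul_one, mul_pow, sq_abs]
      rw [hB, hu, hin, hgn, hnorm]
      have e1 : σ ^ (p - 2) = σ ^ p / (σ * σ) := by
        rw [show p - 2 = p - 1 - 1 by ring, Real.rpow_sub hσ0, Real.rpow_sub hσ0,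
          Real.rpow_one]
        ring
      have e2 : σ ^ ((1 : ℝ) - N) = σ ^ p * σ ^ (-(2 * a)) / σ := by
        rw [show (1 : ℝ) - N = p + (-(2 * a)) - 1 by rw [hpdef]; ring,
          Real.rpow_sub hσ0, Real.rpow_add hσ0, Real.rpow_one]
      have e3 : ((N : ℝ) - 2 - 2 * a) = -p := by rw [hpdef]; ring
      rw [e1, e2, e3]
      field_simp
      ring
    simp only [hBval, integral_const, smul_eq_mul, ← hSdef]
    have e4 : σ ^ ((N : ℝ) - 1) * σ ^ ((1 : ℝ) - N) = 1 := by
      rw [← Real.rpow_add hσ0, show (N : ℝ) - 1 + ((1 : ℝ) - N) = 0 by ring,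
        Real.rpow_zero]
    have e3 : ((N : ℝ) - 2 - 2 * a) = -p := by rw [hpdef]; ring
    calc σ ^ ((N : ℝ) - 1) * (S * (-(p ^ 2 / 2) * A * σ ^ ((1 : ℝ) - N)))
        = (σ ^ ((N : ℝ) - 1) * σ ^ ((1 : ℝ) - N)) * (S * (-(p ^ 2 / 2) * A)) := by ring
      _ = -((((N : ℝ) - 2 - 2 * a) ^ 2) / 2) * A * S := by rw [e4, e3]; ring
  refine Tendsto.congr' ?_ tendsto_const_nhds
  filter_upwards [self_mem_nhdsWithin] with σ hσ
  exact (key σ hσ).symm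
end

section
/- For 0 < r ≤ 2 and any z ∈ ℝ^N, with μ_z(B_s(x)) = ∫_{B_s(x)} |y-z|^{-2a} dy, the function M(x,t) = ∫_t^8 s/μ_z(B_s(x)) ds satisfies, for |x-y| > |x-z|/2, the bound M(x,|x-y|) ≤ c |x-y|^{-N+2a+2} for a constant c depending only on N and a. -/
open Real MeasureTheory

set_option maxHeartbeats 1000000 in
theorem stmt19 (N : ℕ) (hN : 3 ≤ N) (a : ℝ) (ha0 : 0 ≤ a) (ha : a < ((N : ℝ) - 2) / 2)
    (c' : ℝ) (hc' : 0 < c')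
    (hlow : ∀ (x z : EuclideanSpace ℝ (Fin N)) (s : ℝ), 0 < s → s ≤ 8 →
      c' * s ^ (N : ℝ) * max s ‖x - z‖ ^ (-(2 * a))
        ≤ ∫ w in Metric.ball x s, ‖w - z‖ ^ (-(2 * a))) :
    ∃ c > 0, ∀ (z x y : EuclideanSpace ℝ (Fin N)),
      x ∈ Metric.closedBall (0 : EuclideanSpace ℝ (Fin N)) 2 → x ≠ y →
      ‖x - z‖ / 2 < ‖x - y‖ →
      (∫ s in Set.Ioc ‖x - y‖ 8,
          s / ∫ w in Metric.ball x s, ‖w - z‖ ^ (-(2 * a)))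
        ≤ c * ‖x - y‖ ^ (-(N : ℝ) + 2 * a + 2) := by
  have hNa : 2 * a < (N : ℝ) - 2 := by linarith
  set K : ℝ := 2 ^ (2 * a) / c' with hK
  have hK0 : 0 < K := by positivity
  have hden : (0 : ℝ) < (N : ℝ) - 2 - 2 * a := by linarith
  refine ⟨K / ((N : ℝ) - 2 - 2 * a), by positivity, ?_⟩
  intro z x y _ _ hxz
  set t : ℝ := ‖x - y‖ with htdef
  have ht0 : 0 < t := lt_of_le_of_lt (by positivity) hxz
  set p : ℝ := 1 + 2 * a - (N : ℝ) with hp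
  set q : ℝ := -(N : ℝ) + 2 * a + 2 with hq
  have hqneg : q < 0 := by simp only [hq]; linarith
  have hpq : p + 1 = q := by simp only [hp, hq]; ring
  by_cases ht8 : t ≤ 8
  · -- pointwise bound on the integrand
    have hbound : ∀ s ∈ Set.Ioc t 8,
        s / (∫ w in Metric.ball x s, ‖w - z‖ ^ (-(2 * a))) ≤ K * s ^ p := by
      intro s hs
      have hs0 : 0 < s := lt_trans ht0 hs.1
      have hkey := hlow x z s hs0 hs.2
      have hmax : max s ‖x - z‖ ≤ 2 * s := by
        refine max_le (by linarith) ?_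
        have h1 : ‖x - z‖ < 2 * t := by linarith
        linarith [hs.1]
      have hmono : (2 * s) ^ (-(2 * a)) ≤ max s ‖x - z‖ ^ (-(2 * a)) :=
        Real.rpow_le_rpow_of_nonpos (lt_max_iff.2 (Or.inl hs0)) hmax (by linarith)
      have hB : c' * s ^ (N : ℝ) * (2 * s) ^ (-(2 * a))
          ≤ ∫ w in Metric.ball x s, ‖w - z‖ ^ (-(2 * a)) := by
        calc c' * s ^ (N : ℝ) * (2 * s) ^ (-(2 * a))
            ≤ c' * s ^ (N : ℝ) * max s ‖x - z‖ ^ (-(2 * a)) := by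
              apply mul_le_mul_of_nonneg_left hmono; positivity
          _ ≤ _ := hkey
      have hBpos : 0 < c' * s ^ (N : ℝ) * (2 * s) ^ (-(2 * a)) := by positivity
      have h1 : s / (∫ w in Metric.ball x s, ‖w - z‖ ^ (-(2 * a)))
          ≤ s / (c' * s ^ (N : ℝ) * (2 * s) ^ (-(2 * a))) :=
        div_le_div_of_nonneg_left hs0.le hBpos hB
      refine h1.trans_eq ?_
      rw [Real.mul_rpow (by norm_num) hs0.le]
      have hsplit : s ^ p = s * s ^ (2 * a) * (s ^ (N : ℝ))⁻¹ := by
        rw [hp, show (1 : ℝ) + 2 * a - (N : ℝ) = (1 + 2 * a) + (-(N : ℝ)) by ring,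
          Real.rpow_add hs0, Real.rpow_add hs0, Real.rpow_one,
          Real.rpow_neg hs0.le]
      rw [hsplit, Real.rpow_neg hs0.le (2 * a), Real.rpow_neg (by norm_num) (2 * a)]
      have hsN : (0:ℝ) < s ^ (N : ℝ) := by positivity
      have hsa : (0:ℝ) < s ^ (2 * a) := by positivity
      have h2a : (0:ℝ) < (2:ℝ) ^ (2 * a) := by positivity
      rw [hK]
      field_simp
    -- integrability of the dominating function
    have hg_int : IntegrableOn (fun s => K * s ^ p) (Set.Ioc t 8) := by
      have hcont : ContinuousOn (fun s : ℝ => K * s ^ p) (Set.Icc t 8) := by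
        refine continuousOn_const.mul (ContinuousOn.rpow_const continuousOn_id ?_)
        intro u hu
        exact Or.inl (ne_of_gt (lt_of_lt_of_le ht0 hu.1))
      exact (hcont.integrableOn_Icc).mono_set Set.Ioc_subset_Icc_self
    -- monotonicity of the integral
    have hmono_int : (∫ s in Set.Ioc t 8,
          s / ∫ w in Metric.ball x s, ‖w - z‖ ^ (-(2 * a)))
        ≤ ∫ s in Set.Ioc t 8, K * s ^ p := by
      refine integral_mono_of_nonneg ?_ hg_int ?_
      · refine (ae_restrict_iff' measurableSet_Ioc).2 (Filter.Eventually.of_forall ?_)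
        intro s hs
        have hs0 : 0 < s := lt_trans ht0 hs.1
        have hint : 0 ≤ ∫ w in Metric.ball x s, ‖w - z‖ ^ (-(2 * a)) :=
          integral_nonneg fun w => by positivity
        exact div_nonneg hs0.le hint
      · exact (ae_restrict_iff' measurableSet_Ioc).2 (Filter.Eventually.of_forall hbound)
    -- compute the integral of the dominating function
    have hne : p ≠ -1 := by
      intro h
      rw [hp] at h
      have : (2:ℝ) * a = (N : ℝ) - 2 := by linarith
      linarith
    have hnotin : (0 : ℝ) ∉ Set.uIcc t 8 := by
      rw [Set.uIcc_of_le ht8]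
      intro h
      exact absurd h.1 (not_le.2 ht0)
    have hcalc : (∫ s in Set.Ioc t 8, K * s ^ p)
        = K * (((8 : ℝ) ^ (p + 1) - t ^ (p + 1)) / (p + 1)) := by
      rw [← intervalIntegral.integral_of_le ht8, intervalIntegral.integral_const_mul,
        integral_rpow (Or.inr ⟨hne, hnotin⟩)]
    have hfinal : K * (((8 : ℝ) ^ (p + 1) - t ^ (p + 1)) / (p + 1))
        ≤ K / ((N : ℝ) - 2 - 2 * a) * t ^ q := by
      rw [hpq]
      have h8q : (0 : ℝ) ≤ (8 : ℝ) ^ q := Real.rpow_nonneg (by norm_num) q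
      have hqeq : q = -((N : ℝ) - 2 - 2 * a) := by rw [hq]; ring
      have hstep : ((8 : ℝ) ^ q - t ^ q) / q ≤ t ^ q / ((N : ℝ) - 2 - 2 * a) := by
        rw [hqeq, div_neg, neg_le, ← neg_div, neg_sub]
        gcongr
        linarith [Real.rpow_nonneg (show (0:ℝ) ≤ 8 by norm_num) (2 * a - ((N:ℝ) - 2))]
      calc K * (((8 : ℝ) ^ q - t ^ q) / q) ≤ K * (t ^ q / ((N : ℝ) - 2 - 2 * a)) :=
            mul_le_mul_of_nonneg_left hstep hK0.le
        _ = K / ((N : ℝ) - 2 - 2 * a) * t ^ q := by ring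
    calc (∫ s in Set.Ioc t 8,
          s / ∫ w in Metric.ball x s, ‖w - z‖ ^ (-(2 * a)))
        ≤ ∫ s in Set.Ioc t 8, K * s ^ p := hmono_int
      _ = K * (((8 : ℝ) ^ (p + 1) - t ^ (p + 1)) / (p + 1)) := hcalc
      _ ≤ K / ((N : ℝ) - 2 - 2 * a) * t ^ q := hfinal
  · -- t > 8 : empty interval
    push_neg at ht8
    rw [Set.Ioc_eq_empty (by intro h; exact absurd h (not_lt.2 ht8.le))]
    simp only [Measure.restrict_empty, integral_zero_measure]
    positivity
end
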